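/- Let λᵃ, λᵇ, λᶜ and y be random vectors in ℝᵈ such that λᵃ − y, λᵇ − y, λᶜ − y are pairwise independent with mean zero. Then E‖λᵃ − y‖² = (E‖λᵃ − λᵇ‖² + E‖λᵃ − λᶜ‖² − E‖λᵇ − λᶜ‖²)/2. -/

import Mathlib

open MeasureTheory ProbabilityTheory
open scoped InnerProductSpace

section aux

variable {Ω : Type*} [MeasurableSpace Ω] {μ : Measure Ω} [IsProbabilityMeasure μ] {d : ℕ}

private lemma proj_memℒp {A : Ω → EuclideanSpace ℝ (Fin d)} (hA : MemLp A 2 μ) (i : Fin d) :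
    MemLp (fun ω => A ω i) 2 μ :=
  (EuclideanSpace.proj i : EuclideanSpace ℝ (Fin d) →L[ℝ] ℝ).comp_memLp' hA

private lemma integral_proj {A : Ω → EuclideanSpace ℝ (Fin d)} (hA : MemLp A 2 μ)
    (hzA : ∫ ω, A ω ∂μ = 0) (i : Fin d) : ∫ ω, A ω i ∂μ = 0 := by
  have := (EuclideanSpace.proj i : EuclideanSpace ℝ (Fin d) →L[ℝ] ℝ).integral_comp_comm
    (hA.integrable one_le_two)
  simpa [hzA] using this

private lemma cross_aux {A B : Ω → EuclideanSpace ℝ (Fin d)}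
    (hAB : IndepFun A B μ) (hA2 : MemLp A 2 μ) (hB2 : MemLp B 2 μ)
    (hzA : ∫ ω, A ω ∂μ = 0) :
    Integrable (fun ω => ⟪A ω, B ω⟫_ℝ) μ ∧ ∫ ω, ⟪A ω, B ω⟫_ℝ ∂μ = 0 := by
  have hmeas : ∀ i : Fin d, Measurable fun x : EuclideanSpace ℝ (Fin d) => x i := fun i =>
    (EuclideanSpace.proj i : EuclideanSpace ℝ (Fin d) →L[ℝ] ℝ).continuous.measurable
  have hindep : ∀ i : Fin d, IndepFun (fun ω => A ω i) (fun ω => B ω i) μ := fun i =>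
    hAB.comp (hmeas i) (hmeas i)
  have hint : ∀ i : Fin d, Integrable (fun ω => A ω i * B ω i) μ := fun i =>
    (hindep i).integrable_mul ((proj_memℒp hA2 i).integrable one_le_two)
      ((proj_memℒp hB2 i).integrable one_le_two)
  have hinner : ∀ ω, ⟪A ω, B ω⟫_ℝ = ∑ i, A ω i * B ω i := by
    intro ω; simp [PiLp.inner_apply, RCLike.inner_apply, mul_comm]
  constructor
  · simp only [hinner]
    exact integrable_finset_sum _ fun i _ => hint i
  · simp only [hinner]
    rw [integral_finset_sum _ fun i _ => hint i]
    refine Finset.sum_eq_zero fun i _ => ?_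
    have h := (hindep i).integral_mul_eq_mul_integral
      ((proj_memℒp hA2 i).integrable one_le_two).aestronglyMeasurable
      ((proj_memℒp hB2 i).integrable one_le_two).aestronglyMeasurable
    rw [show (fun ω => A ω i * B ω i) = ((fun ω => A ω i) * fun ω => B ω i) from rfl, h,
      integral_proj hA2 hzA i, zero_mul]

private lemma norm_sq_integrable {A : Ω → EuclideanSpace ℝ (Fin d)} (hA : MemLp A 2 μ) :
    Integrable (fun ω => ‖A ω‖ ^ 2) μ := by
  have := hA.integrable_norm_rpow two_ne_zero ENNReal.ofNat_ne_top
  convert this using 2 with ω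
  rw [ENNReal.toReal_ofNat]
  rw [show ((2:ℝ) = ((2:ℕ):ℝ)) by norm_num, Real.rpow_natCast]

private lemma pyth {A B : Ω → EuclideanSpace ℝ (Fin d)}
    (hAB : IndepFun A B μ) (hA2 : MemLp A 2 μ) (hB2 : MemLp B 2 μ)
    (hzA : ∫ ω, A ω ∂μ = 0) :
    ∫ ω, ‖A ω - B ω‖ ^ 2 ∂μ = (∫ ω, ‖A ω‖ ^ 2 ∂μ) + ∫ ω, ‖B ω‖ ^ 2 ∂μ := by
  obtain ⟨hci, hcz⟩ := cross_aux hAB hA2 hB2 hzA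
  have key : ∀ ω, ‖A ω - B ω‖ ^ 2 = ‖A ω‖ ^ 2 - 2 * ⟪A ω, B ω⟫_ℝ + ‖B ω‖ ^ 2 := fun ω =>
    norm_sub_sq_real (A ω) (B ω)
  simp only [key]
  have h1 : Integrable (fun ω => ‖A ω‖ ^ 2 - 2 * ⟪A ω, B ω⟫_ℝ) μ :=
    (norm_sq_integrable hA2).sub (hci.const_mul 2)
  have h2 : Integrable (fun ω => 2 * ⟪A ω, B ω⟫_ℝ) μ := hci.const_mul 2
  rw [integral_add h1 (norm_sq_integrable hB2),
    integral_sub (norm_sq_integrable hA2) h2, integral_const_mul, hcz]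
  ring

end aux

/-- Triplet identity for vector-valued labeling functions with pairwise independent
mean-zero errors. -/
theorem stmt_3 {Ω : Type*} [MeasurableSpace Ω] (μ : Measure Ω) [IsProbabilityMeasure μ]
    (d : ℕ) (la lb lc y : Ω → EuclideanSpace ℝ (Fin d))
    (hma : Measurable (fun ω => la ω - y ω))
    (hmb : Measurable (fun ω => lb ω - y ω))
    (hmc : Measurable (fun ω => lc ω - y ω))
    (hab : IndepFun (fun ω => la ω - y ω) (fun ω => lb ω - y ω) μ)
    (hac : IndepFun (fun ω => la ω - y ω) (fun ω => lc ω - y ω) μ)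
    (hbc : IndepFun (fun ω => lb ω - y ω) (fun ω => lc ω - y ω) μ)
    (ha2 : MemLp (fun ω => la ω - y ω) 2 μ)
    (hb2 : MemLp (fun ω => lb ω - y ω) 2 μ)
    (hc2 : MemLp (fun ω => lc ω - y ω) 2 μ)
    (hza : ∫ ω, (la ω - y ω) ∂μ = 0)
    (hzb : ∫ ω, (lb ω - y ω) ∂μ = 0)
    (hzc : ∫ ω, (lc ω - y ω) ∂μ = 0) :
    ∫ ω, ‖la ω - y ω‖ ^ 2 ∂μ =
      ((∫ ω, ‖la ω - lb ω‖ ^ 2 ∂μ) + (∫ ω, ‖la ω - lc ω‖ ^ 2 ∂μ)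
        - ∫ ω, ‖lb ω - lc ω‖ ^ 2 ∂μ) / 2 := by
  have eab : ∫ ω, ‖la ω - lb ω‖ ^ 2 ∂μ
      = ∫ ω, ‖(la ω - y ω) - (lb ω - y ω)‖ ^ 2 ∂μ := by
    congr 1; funext ω; rw [sub_sub_sub_cancel_right]
  have eac : ∫ ω, ‖la ω - lc ω‖ ^ 2 ∂μ
      = ∫ ω, ‖(la ω - y ω) - (lc ω - y ω)‖ ^ 2 ∂μ := by
    congr 1; funext ω; rw [sub_sub_sub_cancel_right]
  have ebc : ∫ ω, ‖lb ω - lc ω‖ ^ 2 ∂μ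
      = ∫ ω, ‖(lb ω - y ω) - (lc ω - y ω)‖ ^ 2 ∂μ := by
    congr 1; funext ω; rw [sub_sub_sub_cancel_right]
  rw [eab, eac, ebc, pyth hab ha2 hb2 hza, pyth hac ha2 hc2 hza, pyth hbc hb2 hc2 hzb]
  ring
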